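/- On the projective line ℙ¹, the first sheaf cohomology of O(i) has dimension -1-i if i < 0 and dimension 0 if i ≥ 0. -/

import Mathlib

/-- The sections of `O(i)` on the second chart of ℙ¹: the ℂ-span of the Laurent
monomials `z^j` with `j ≤ i` (i.e. `zⁱ·ℂ[z⁻¹]`). -/
noncomputable def M2 (i : ℤ) : Submodule ℂ (LaurentPolynomial ℂ) :=
  Submodule.span ℂ {f | ∃ j : ℤ, j ≤ i ∧ f = LaurentPolynomial.T j}

/-- The Čech differential for the sheaf `O(i)` on ℙ¹ with respect to the
standard two-chart cover: `(m₁, m₂) ↦ φ₁(m₁) - φ₂(m₂)`, from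
`ℂ[z] ⊕ zⁱ·ℂ[z⁻¹]` to `ℂ[z,z⁻¹]`. -/
noncomputable def cechMap (i : ℤ) : Polynomial ℂ × M2 i →ₗ[ℂ] LaurentPolynomial ℂ :=
  LinearMap.coprod (Polynomial.toLaurentAlg : Polynomial ℂ →ₐ[ℂ] _).toLinearMap
    (-(M2 i).subtype)

lemma T_eq_single (j : ℤ) : (LaurentPolynomial.T j : LaurentPolynomial ℂ) = AddMonoidAlgebra.single j 1 :=
  rfl

lemma supp_union (s t : Set ℤ) :
    AddMonoidAlgebra.supported ℂ ℂ (s ∪ t) =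
      AddMonoidAlgebra.supported ℂ ℂ s ⊔ AddMonoidAlgebra.supported ℂ ℂ t := by
  simp only [AddMonoidAlgebra.supported_eq_map, Finsupp.supported_union, Submodule.map_sup]

lemma supp_univ : AddMonoidAlgebra.supported ℂ ℂ (Set.univ : Set ℤ) = ⊤ := by
  ext x; simp [AddMonoidAlgebra.mem_supported]

lemma supp_disjoint (s : Set ℤ) :
    Disjoint (AddMonoidAlgebra.supported ℂ ℂ s) (AddMonoidAlgebra.supported ℂ ℂ sᶜ) := by
  rw [Submodule.disjoint_def]
  intro x h1 h2
  rw [AddMonoidAlgebra.mem_supported] at h1 h2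
  have : x.coeff = 0 := by
    rw [← Finsupp.support_eq_empty, ← Finset.coe_eq_empty]
    exact Set.subset_empty_iff.mp (fun j hj => (h2 hj) (h1 hj))
  rw [← AddMonoidAlgebra.coeff_inj, this]; rfl

lemma single_mem_supp {s : Set ℤ} (n : ℤ) (a : ℂ) (hn : n ∈ s) :
    AddMonoidAlgebra.single n a ∈ AddMonoidAlgebra.supported ℂ ℂ s :=
  AddMonoidAlgebra.mem_supported.2 (fun j hj => by
    have := Finsupp.support_single_subset hj
    rw [Finset.mem_singleton] at this
    rw [this]; exact hn)

lemma range_toLaurent :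
    LinearMap.range (Polynomial.toLaurentAlg : Polynomial ℂ →ₐ[ℂ] _).toLinearMap
      = AddMonoidAlgebra.supported ℂ ℂ {j : ℤ | 0 ≤ j} := by
  apply le_antisymm
  · rintro _ ⟨p, rfl⟩
    induction p using Polynomial.induction_on' with
    | add p q hp hq =>
      simpa [map_add] using add_mem hp hq
    | monomial n a =>
      show (Polynomial.toLaurent (Polynomial.monomial n a)) ∈ _
      rw [Polynomial.toLaurent_C_mul_T]
      have : (LaurentPolynomial.C a * LaurentPolynomial.T (n : ℤ)) =
          AddMonoidAlgebra.single (n : ℤ) a := by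
        rw [← LaurentPolynomial.single_eq_C_mul_T]
      rw [this]
      exact single_mem_supp _ a (show (0:ℤ) ≤ n by positivity)
  · rw [AddMonoidAlgebra.supported_eq_span_single, Submodule.span_le]
    rintro _ ⟨j, hj, rfl⟩
    exact ⟨Polynomial.X ^ j.toNat, by
      simp only [AlgHom.toLinearMap_apply]
      show Polynomial.toLaurent _ = _
      rw [map_pow, Polynomial.toLaurent_X, LaurentPolynomial.T_pow, ← T_eq_single, mul_one]
      congr 1
      exact Int.toNat_of_nonneg hj⟩

lemma M2_eq_supported (i : ℤ) : M2 i = AddMonoidAlgebra.supported ℂ ℂ {j : ℤ | j ≤ i} := by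
  rw [AddMonoidAlgebra.supported_eq_span_single, M2]
  congr 1
  ext f
  constructor
  · rintro ⟨j, hj, rfl⟩; exact ⟨j, hj, (T_eq_single j).symm⟩
  · rintro ⟨j, hj, rfl⟩; exact ⟨j, hj, T_eq_single j⟩

lemma range_cechMap (i : ℤ) :
    LinearMap.range (cechMap i) = AddMonoidAlgebra.supported ℂ ℂ {j : ℤ | 0 ≤ j ∨ j ≤ i} := by
  rw [cechMap, LinearMap.range_coprod, LinearMap.range_neg, Submodule.range_subtype,
    range_toLaurent, M2_eq_supported]
  rw [← supp_union]
  rfl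

/-- `H¹(ℙ¹, O(i))`, computed as the cokernel of the Čech differential for the
two-chart cover, has dimension `-1 - i` if `i < 0` and `0` if `i ≥ 0`. -/
theorem dim_H1_of_twisting_sheaf (i : ℤ) :
    (Module.finrank ℂ (LaurentPolynomial ℂ ⧸ LinearMap.range (cechMap i)) : ℤ) =
      if i < 0 then -1 - i else 0 := by
  rw [range_cechMap]
  by_cases hi : i < 0
  · rw [if_pos hi]
    have hcompl : {j : ℤ | 0 ≤ j ∨ j ≤ i}ᶜ = Set.Ioo i 0 := by
      ext j; simp only [Set.mem_compl_iff, Set.mem_setOf_eq, not_or, not_le, Set.mem_Ioo]; omega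
    have hIsCompl : IsCompl (AddMonoidAlgebra.supported ℂ ℂ {j : ℤ | 0 ≤ j ∨ j ≤ i})
        (AddMonoidAlgebra.supported ℂ ℂ {j : ℤ | 0 ≤ j ∨ j ≤ i}ᶜ) := by
      constructor
      · exact supp_disjoint _
      · rw [codisjoint_iff, ← supp_union, Set.union_compl_self,
          supp_univ]
    have e := Submodule.quotientEquivOfIsCompl _ _ hIsCompl
    have e2 := AddMonoidAlgebra.supportedEquivFinsupp (S := ℂ) (R := ℂ)
      ({j : ℤ | 0 ≤ j ∨ j ≤ i}ᶜ)
    have := (e.trans e2).finrank_eq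
    rw [this]
    rw [hcompl] at *
    haveI : Fintype (Set.Ioo i 0) := by rw [hcompl]; infer_instance
    rw [Module.finrank_finsupp, Module.finrank_self, mul_one]
    have hcard : Fintype.card (Set.Ioo i 0) = (Finset.Ioo i 0).card := by
      rw [← Set.toFinset_card]
      congr 1
      ext j
      simp
    rw [hcard, Int.card_Ioo]
    omega
  · rw [if_neg hi]
    have : {j : ℤ | 0 ≤ j ∨ j ≤ i} = Set.univ := by
      ext j; simp; omega
    rw [this, supp_univ]
    haveI : Subsingleton ((LaurentPolynomial ℂ) ⧸ (⊤ : Submodule ℂ (LaurentPolynomial ℂ))) :=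
      Submodule.Quotient.subsingleton_iff.mpr rfl
    simp [Module.finrank_zero_of_subsingleton]
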